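/- Let (q_α, h_α, a_α) and (q_β, h_β, a_β) be differentiable maps ℝ → ℝ³ with q_α = h_α × a_α and q_β = h_β × a_β, and let k₂^α, k₂^β : ℝ → ℝ be functions with a_α'(t) = −k₂^α(t)·h_α(t) and a_β'(s) = −k₂^β(s)·h_β(s), where k₂^α is never zero and k₂^β(s) ≠ 0 for all s. Let φ : ℝ → ℝ be differentiable with φ'(s) = k₂^β(s)/k₂^α(φ(s)) for all s. If the asymptotic normals agree, a_α(φ(s)) = a_β(s) for all s, then the central normals agree, h_α(φ(s)) = h_β(s) for all s, and the rulings agree, q_α(φ(s)) = q_β(s) for all s; i.e. the two ruled surfaces are similar under the variable transformation φ. -/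

import Mathlib

open Real

/-- Cross product on `EuclideanSpace ℝ (Fin 3)`. -/
noncomputable def cross3 (u v : EuclideanSpace ℝ (Fin 3)) : EuclideanSpace ℝ (Fin 3) :=
  WithLp.toLp 2 (crossProduct u v)

/-- If the asymptotic normals of two ruled surfaces agree under a variable
transformation φ with `φ' = k₂^β / (k₂^α ∘ φ)`, then the central normals agree and the
rulings agree: the surfaces are similar ruled surfaces under φ. -/
theorem asymptotic_normals_agree_implies_similar
    (qα hα aα qβ hβ aβ : ℝ → EuclideanSpace ℝ (Fin 3)) (k₂α k₂β : ℝ → ℝ)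
    (hqα : Differentiable ℝ qα) (hhα : Differentiable ℝ hα) (haα : Differentiable ℝ aα)
    (hqβ : Differentiable ℝ qβ) (hhβ : Differentiable ℝ hβ) (haβ : Differentiable ℝ aβ)
    (hqαdef : ∀ t, qα t = cross3 (hα t) (aα t))
    (hqβdef : ∀ s, qβ s = cross3 (hβ s) (aβ s))
    (haα' : ∀ t, deriv aα t = (-(k₂α t)) • hα t)
    (haβ' : ∀ s, deriv aβ s = (-(k₂β s)) • hβ s)
    (hk₂α : ∀ t, k₂α t ≠ 0) (hk₂β : ∀ s, k₂β s ≠ 0)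
    (φ : ℝ → ℝ) (hφ : Differentiable ℝ φ)
    (hφ' : ∀ s, deriv φ s = k₂β s / k₂α (φ s))
    (hasym : ∀ s, aα (φ s) = aβ s) :
    (∀ s, hα (φ s) = hβ s) ∧ (∀ s, qα (φ s) = qβ s) := by
  have hmain : ∀ s, hα (φ s) = hβ s := by
    intro s
    have hcomp : deriv (fun x => aα (φ x)) s = deriv φ s • deriv aα (φ s) :=
      deriv.scomp s (haα.differentiableAt) (hφ.differentiableAt)
    have heq : (fun x => aα (φ x)) = aβ := funext hasym
    rw [heq, haβ', haα', hφ'] at hcomp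
    have hkey : (-(k₂β s)) • hβ s = (-(k₂β s)) • hα (φ s) := by
      rw [hcomp, smul_smul]
      congr 1
      field_simp [hk₂α (φ s)]
    have := smul_right_injective (EuclideanSpace ℝ (Fin 3)) (neg_ne_zero.mpr (hk₂β s)) hkey
    exact this.symm
  refine ⟨hmain, fun s => ?_⟩
  rw [hqαdef, hqβdef, hmain, hasym]
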